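/- Let a < b be real numbers and let f and g be differentiable functions on the open interval (a,b). Suppose that either g'(x) > 0 for all x ∈ (a,b) or g'(x) < 0 for all x ∈ (a,b). Suppose also that either f(a⁺) = g(a⁺) = 0 or f(b⁻) = g(b⁻) = 0 (in particular these one-sided limits exist). If the function x ↦ f'(x)/g'(x) is strictly increasing on (a,b), then the function x ↦ f(x)/g(x) is strictly increasing on (a,b). (Note that g(x) ≠ 0 for all x ∈ (a,b), since g is strictly monotone on (a,b) with limit 0 at the relevant endpoint.) -/

import Mathlib

open Set Filter Topology

private lemma lhop_aux
    (a b : ℝ) (hab : a < b) (f g f' g' : ℝ → ℝ)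
    (hf : ∀ x ∈ Set.Ioo a b, HasDerivAt f (f' x) x)
    (hg : ∀ x ∈ Set.Ioo a b, HasDerivAt g (g' x) x)
    (hg' : ∀ x ∈ Set.Ioo a b, 0 < g' x)
    (hlim : (Filter.Tendsto f (nhdsWithin a (Set.Ioi a)) (nhds 0) ∧
             Filter.Tendsto g (nhdsWithin a (Set.Ioi a)) (nhds 0)) ∨
            (Filter.Tendsto f (nhdsWithin b (Set.Iio b)) (nhds 0) ∧
             Filter.Tendsto g (nhdsWithin b (Set.Iio b)) (nhds 0)))
    (hmono : StrictMonoOn (fun x => f' x / g' x) (Set.Ioo a b)) :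
    StrictMonoOn (fun x => f x / g x) (Set.Ioo a b) := by
  have hcont : ∀ h : ℝ → ℝ, (∀ x ∈ Set.Ioo a b, HasDerivAt h (f' x) x) → True := fun _ _ => trivial
  -- g is strictly monotone on (a,b)
  have hgc : ContinuousOn g (Set.Ioo a b) := fun x hx =>
    ((hg x hx).continuousAt).continuousWithinAt
  have hgmono : StrictMonoOn g (Set.Ioo a b) := by
    apply strictMonoOn_of_deriv_pos (convex_Ioo a b) hgc
    intro x hx
    rw [interior_Ioo] at hx
    rw [(hg x hx).deriv]
    exact hg' x hx
  -- Cauchy MVT on subintervals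
  have cauchy : ∀ x ∈ Set.Ioo a b, ∀ y ∈ Set.Ioo a b, x < y →
      ∃ c ∈ Set.Ioo x y, (f y - f x) / (g y - g x) = f' c / g' c := by
    intro x hx y hy hxy
    have hsub : Set.Icc x y ⊆ Set.Ioo a b := fun t ht =>
      ⟨hx.1.trans_le ht.1, ht.2.trans_lt hy.2⟩
    have hsub' : Set.Ioo x y ⊆ Set.Ioo a b := Set.Subset.trans Set.Ioo_subset_Icc_self hsub
    have hfc : ContinuousOn f (Set.Icc x y) := fun t ht =>
      ((hf t (hsub ht)).continuousAt).continuousWithinAt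
    have hgc' : ContinuousOn g (Set.Icc x y) := fun t ht =>
      ((hg t (hsub ht)).continuousAt).continuousWithinAt
    obtain ⟨c, hc, heq⟩ := exists_ratio_hasDerivAt_eq_ratio_slope f f' hxy hfc
      (fun t ht => hf t (hsub' ht)) g g' hgc' (fun t ht => hg t (hsub' ht))
    refine ⟨c, hc, ?_⟩
    have hgne : g y - g x ≠ 0 :=
      sub_ne_zero.mpr (hgmono hx hy hxy).ne'
    have hg'ne : g' c ≠ 0 := (hg' c (hsub' hc)).ne'
    rw [div_eq_div_iff hgne hg'ne]
    linarith [heq]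
  rcases hlim with ⟨hfa, hga⟩ | ⟨hfb, hgb⟩
  · -- limits at a: g > 0 on (a,b)
    have hgpos : ∀ x ∈ Set.Ioo a b, 0 < g x := by
      intro x hx
      have hm : (a + x) / 2 ∈ Set.Ioo a b :=
        ⟨by linarith [hx.1], by linarith [hx.1, hx.2]⟩
      have hmx : (a + x) / 2 < x := by linarith [hx.1]
      have h0 : (0 : ℝ) ≤ g ((a + x) / 2) := by
        refine le_of_tendsto hga ?_
        filter_upwards [Ioo_mem_nhdsGT_of_mem ⟨le_refl a, hm.1⟩] with t ht
        exact (hgmono ⟨ht.1, ht.2.trans hm.2⟩ hm ht.2).le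
      exact h0.trans_lt (hgmono hm hx hmx)
    -- key: f x / g x ≤ f' x / g' x
    have key : ∀ x ∈ Set.Ioo a b, f x / g x ≤ f' x / g' x := by
      intro x hx
      have hgx : g x ≠ 0 := (hgpos x hx).ne'
      have htend : Filter.Tendsto (fun t => (f x - f t) / (g x - g t))
          (nhdsWithin a (Set.Ioi a)) (nhds (f x / g x)) := by
        have h1 : Filter.Tendsto (fun t => f x - f t) (nhdsWithin a (Set.Ioi a))
            (nhds (f x - 0)) := tendsto_const_nhds.sub hfa
        have h2 : Filter.Tendsto (fun t => g x - g t) (nhdsWithin a (Set.Ioi a))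
            (nhds (g x - 0)) := tendsto_const_nhds.sub hga
        simpa [Pi.div_def] using h1.div h2 (by simpa using hgx)
      refine le_of_tendsto htend ?_
      filter_upwards [Ioo_mem_nhdsGT_of_mem ⟨le_refl a, hx.1⟩] with t ht
      have htab : t ∈ Set.Ioo a b := ⟨ht.1, ht.2.trans hx.2⟩
      obtain ⟨c, hc, heq⟩ := cauchy t htab x hx ht.2
      have hcab : c ∈ Set.Ioo a b := ⟨htab.1.trans hc.1, hc.2.trans hx.2⟩
      rw [heq]
      exact (hmono hcab hx hc.2).le
    intro x hx y hy hxy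
    obtain ⟨c, hc, heq⟩ := cauchy x hx y hy hxy
    have hcab : c ∈ Set.Ioo a b := ⟨hx.1.trans hc.1, hc.2.trans hy.2⟩
    have h1 : f x / g x < (f y - f x) / (g y - g x) := by
      calc f x / g x ≤ f' x / g' x := key x hx
        _ < f' c / g' c := hmono hx hcab hc.1
        _ = (f y - f x) / (g y - g x) := heq.symm
    have hgx := hgpos x hx
    have hgy := hgpos y hy
    have hgd : 0 < g y - g x := sub_pos.mpr (hgmono hx hy hxy)
    rw [div_lt_div_iff₀ hgx hgd] at h1
    show f x / g x < f y / g y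
    rw [div_lt_div_iff₀ hgx hgy]
    nlinarith
  · -- limits at b: g < 0 on (a,b)
    have hgneg : ∀ x ∈ Set.Ioo a b, g x < 0 := by
      intro x hx
      have hm : (x + b) / 2 ∈ Set.Ioo a b :=
        ⟨by linarith [hx.1, hx.2], by linarith [hx.2]⟩
      have hmx : x < (x + b) / 2 := by linarith [hx.2]
      have h0 : g ((x + b) / 2) ≤ 0 := by
        refine ge_of_tendsto hgb ?_
        filter_upwards [Ioo_mem_nhdsLT_of_mem ⟨hm.2, le_refl b⟩] with t ht
        exact (hgmono hm ⟨hx.1.trans (hmx.trans ht.1), ht.2⟩ ht.1).le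
      exact lt_of_lt_of_le (hgmono hx hm hmx) h0
    -- key: f' y / g' y ≤ f y / g y
    have key : ∀ y ∈ Set.Ioo a b, f' y / g' y ≤ f y / g y := by
      intro y hy
      have hgy : g y ≠ 0 := (hgneg y hy).ne
      have htend : Filter.Tendsto (fun t => (f t - f y) / (g t - g y))
          (nhdsWithin b (Set.Iio b)) (nhds (f y / g y)) := by
        have h1 : Filter.Tendsto (fun t => f t - f y) (nhdsWithin b (Set.Iio b))
            (nhds (0 - f y)) := hfb.sub tendsto_const_nhds
        have h2 : Filter.Tendsto (fun t => g t - g y) (nhdsWithin b (Set.Iio b))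
            (nhds (0 - g y)) := hgb.sub tendsto_const_nhds
        have := h1.div h2 (by simpa using hgy)
        simpa [neg_div_neg_eq, Pi.div_def] using this
      refine ge_of_tendsto htend ?_
      filter_upwards [Ioo_mem_nhdsLT_of_mem ⟨hy.2, le_refl b⟩] with t ht
      have htab : t ∈ Set.Ioo a b := ⟨hy.1.trans ht.1, ht.2⟩
      obtain ⟨c, hc, heq⟩ := cauchy y hy t htab ht.1
      have hcab : c ∈ Set.Ioo a b := ⟨hy.1.trans hc.1, hc.2.trans ht.2⟩
      rw [heq]
      exact (hmono hy hcab hc.1).le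
    intro x hx y hy hxy
    obtain ⟨c, hc, heq⟩ := cauchy x hx y hy hxy
    have hcab : c ∈ Set.Ioo a b := ⟨hx.1.trans hc.1, hc.2.trans hy.2⟩
    have h1 : (f y - f x) / (g y - g x) < f y / g y := by
      calc (f y - f x) / (g y - g x) = f' c / g' c := heq
        _ < f' y / g' y := hmono hcab hy hc.2
        _ ≤ f y / g y := key y hy
    have hgx := hgneg x hx
    have hgy := hgneg y hy
    have hgd : 0 < g y - g x := sub_pos.mpr (hgmono hx hy hxy)
    have h1' : (f y - f x) / (g y - g x) < (-(f y)) / (-(g y)) := by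
      rwa [neg_div_neg_eq]
    rw [div_lt_div_iff₀ hgd (by linarith : (0:ℝ) < -(g y))] at h1'
    show f x / g x < f y / g y
    have : (-(f x)) / (-(g x)) < (-(f y)) / (-(g y)) := by
      rw [div_lt_div_iff₀ (by linarith : (0:ℝ) < -(g x)) (by linarith : (0:ℝ) < -(g y))]
      nlinarith
    rwa [neg_div_neg_eq, neg_div_neg_eq] at this

/-- Corollary 3: if `f, g` are differentiable on `(a,b)`, `g'` has constant sign
on `(a,b)`, `f'/g'` is strictly increasing on `(a,b)`, and either
`f(a⁺) = g(a⁺) = 0` or `f(b⁻) = g(b⁻) = 0`, then `f/g` is strictly increasing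
on `(a,b)`. -/
theorem lhopital_monotone_zero_limits
    (a b : ℝ) (hab : a < b) (f g f' g' : ℝ → ℝ)
    (hf : ∀ x ∈ Set.Ioo a b, HasDerivAt f (f' x) x)
    (hg : ∀ x ∈ Set.Ioo a b, HasDerivAt g (g' x) x)
    (hg' : (∀ x ∈ Set.Ioo a b, 0 < g' x) ∨ (∀ x ∈ Set.Ioo a b, g' x < 0))
    (hlim : (Filter.Tendsto f (nhdsWithin a (Set.Ioi a)) (nhds 0) ∧
             Filter.Tendsto g (nhdsWithin a (Set.Ioi a)) (nhds 0)) ∨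
            (Filter.Tendsto f (nhdsWithin b (Set.Iio b)) (nhds 0) ∧
             Filter.Tendsto g (nhdsWithin b (Set.Iio b)) (nhds 0)))
    (hmono : StrictMonoOn (fun x => f' x / g' x) (Set.Ioo a b)) :
    StrictMonoOn (fun x => f x / g x) (Set.Ioo a b) := by
  rcases hg' with hg'pos | hg'neg
  · exact lhop_aux a b hab f g f' g' hf hg hg'pos hlim hmono
  · have h := lhop_aux a b hab (fun x => -f x) (fun x => -g x)
      (fun x => -f' x) (fun x => -g' x)
      (fun x hx => (hf x hx).neg) (fun x hx => (hg x hx).neg)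
      (fun x hx => by simpa using (hg'neg x hx))
      (by
        rcases hlim with ⟨h1, h2⟩ | ⟨h1, h2⟩
        · exact Or.inl ⟨by simpa using h1.neg, by simpa using h2.neg⟩
        · exact Or.inr ⟨by simpa using h1.neg, by simpa using h2.neg⟩)
      (by simpa [neg_div_neg_eq] using hmono)
    simpa [neg_div_neg_eq] using h
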